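/- arXiv:math/0610470 — 3 statements merged into one kernel-verified Lean document; each statement's English description precedes it below -/
import Mathlib

section
/- Let I be a stable monomial ideal of S = K[x_1,...,x_n]. Then max{ m(u) : u ∈ G(I) } ≤ |G(I)|. -/
/-!
Background definitions: monomial ideals, minimal monomial generators, stable / lexsegment /
universal lexsegment ideals, (graded) Betti numbers `β_{i}` and `β_{ij}` of an ideal
(via Koszul homology, using `Tor_i^S(M,K) ≅ H_i(x_1,…,x_n; M)` as graded vector spaces),
Gotzmann and componentwise linear ideals, generic initial ideals, grade and
projective dimension.
-/

open MvPolynomial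

namespace Formalization

variable {K : Type} [Field K] {σ : Type} [Fintype σ] [LinearOrder σ] {n : ℕ}

/-- The total degree of an exponent vector (the degree of the corresponding monomial). -/
def edeg (d : σ →₀ ℕ) : ℕ := d.sum fun _ k => k

/-- An ideal of the polynomial ring is a *monomial ideal* if it is generated by monomials. -/
def IsMonomialIdeal (I : Ideal (MvPolynomial σ K)) : Prop :=
  ∃ A : Set (σ →₀ ℕ), I = Ideal.span ((fun d => (monomial d (1 : K))) '' A)

/-- `G(I)`: the (exponent vectors of the) unique minimal system of monomial generators of a
monomial ideal `I`, i.e. the monomials of `I` having no proper monomial divisor in `I`. -/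
def minGens (I : Ideal (MvPolynomial σ K)) : Set (σ →₀ ℕ) :=
  {d | monomial d (1 : K) ∈ I ∧
    ∀ e : σ →₀ ℕ, e ≤ d → e ≠ d → monomial e (1 : K) ∉ I}

/-- `m(u)`: the largest index (1-indexed, as in `x_1, …, x_n`) of a variable dividing the
monomial with exponent vector `u`. -/
def mdeg (d : Fin n →₀ ℕ) : ℕ := d.support.sup fun i => (i : ℕ) + 1

/-- `m_i(I) = |{u ∈ G(I) : m(u) = i}|`. -/
noncomputable def mcount (I : Ideal (MvPolynomial (Fin n) K)) (i : ℕ) : ℕ :=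
  {u ∈ minGens I | mdeg u = i}.ncard

/-- A monomial ideal is *stable* if for every monomial `u ∈ I` with largest variable
index `j = m(u)` and every `i < j`, the monomial `x_i · u / x_j` belongs to `I`. -/
def IsStable (I : Ideal (MvPolynomial σ K)) : Prop :=
  IsMonomialIdeal I ∧
    ∀ d : σ →₀ ℕ, monomial d (1 : K) ∈ I →
      ∀ j ∈ d.support, (∀ k ∈ d.support, k ≤ j) →
        ∀ i : σ, i < j →
          monomial (d + Finsupp.single i 1 - Finsupp.single j 1) (1 : K) ∈ I

/-- `u <_lex v` for the lexicographic order induced by `x_1 > x_2 > ⋯`: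
at the smallest index where the exponent vectors differ, `v` has the larger exponent. -/
def lexLt (u v : σ →₀ ℕ) : Prop :=
  ∃ i : σ, (∀ j : σ, j < i → u j = v j) ∧ u i < v i

/-- A monomial ideal `I` is *lexsegment* if `u ∈ I`, `deg v = deg u` and `v ≥_lex u`
imply `v ∈ I`. -/
def IsLexsegment (I : Ideal (MvPolynomial σ K)) : Prop :=
  IsMonomialIdeal I ∧
    ∀ u v : σ →₀ ℕ, monomial u (1 : K) ∈ I → edeg v = edeg u →
      (lexLt u v ∨ u = v) → monomial v (1 : K) ∈ I

/-- A lexsegment ideal `I ⊆ K[x_1,…,x_n]` is *universal lexsegment* if for every `m ≥ 1` the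
extension ideal of `K[x_1,…,x_{n+m}]` generated by `I` (equivalently, by the minimal monomial
generators of `I`) is again lexsegment. -/
def IsUniversalLex (I : Ideal (MvPolynomial (Fin n) K)) : Prop :=
  IsLexsegment I ∧
    ∀ m : ℕ, 1 ≤ m →
      IsLexsegment (Ideal.map (rename (R := K) (Fin.castLE (Nat.le_add_right n m))) I)

/-- An ideal is homogeneous if it contains all homogeneous components of its elements. -/
def IsHomogeneousIdeal (I : Ideal (MvPolynomial σ K)) : Prop :=
  ∀ p ∈ I, ∀ j : ℕ, homogeneousComponent j p ∈ I

/-- The homogeneous component of degree `d ∈ ℤ` of an ideal `I`, as a `K`-subspace: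
the homogeneous polynomials of degree `d` belonging to `I` (zero if `d < 0`). -/
def hdeg (I : Ideal (MvPolynomial σ K)) (d : ℤ) : Submodule K (MvPolynomial σ K) where
  carrier := {p | p = 0 ∨ (p ∈ I ∧ ∃ e : ℕ, (e : ℤ) = d ∧ p.IsHomogeneous e)}
  zero_mem' := Or.inl rfl
  add_mem' := by
    rintro p q (rfl | ⟨hpI, e, he, hpe⟩) (rfl | ⟨hqI, e', he', hqe⟩)
    · simp
    · simpa using Or.inr ⟨‹_›, e', he', hqe⟩
    · simpa using Or.inr ⟨hpI, e, he, hpe⟩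
    · refine Or.inr ⟨add_mem hpI hqI, e, he, hpe.add ?_⟩
      obtain rfl : e' = e := by omega
      exact hqe
  smul_mem' := by
    rintro c p (rfl | ⟨hpI, e, he, hpe⟩)
    · exact Or.inl (smul_zero c)
    · refine Or.inr ⟨?_, e, he, ?_⟩
      · simpa [smul_eq_C_mul] using Ideal.mul_mem_left I _ hpI
      · simpa [smul_eq_C_mul] using (isHomogeneous_C σ c).mul hpe

/-- Two ideals have the same Hilbert function. -/
def HilbertEq (I L : Ideal (MvPolynomial σ K)) : Prop :=
  ∀ d : ℕ, Module.rank K (hdeg I (d : ℤ)) = Module.rank K (hdeg L (d : ℤ))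

/-! ### Betti numbers via Koszul homology

For a module `M` over `S = K[x_1,…,x_n]` one has `Tor_i^S(M, K) ≅ H_i(x_1,…,x_n; M)`,
the `i`-th homology of the Koszul complex with coefficients in `M`, compatibly with the
grading.  We use this to define the Betti numbers `β_i(I) = dim_K Tor_i^S(I, K)` and the
graded Betti numbers `β_{ij}(I) = dim_K Tor_i^S(I, K)_j` of an ideal `I`. -/

/-- The space of `i`-th Koszul chains with polynomial coefficients: functions on the
`i`-element subsets of the variables (a basis of `Λ^i S^n`). -/
abbrev KChain (σ K : Type) [Fintype σ] [LinearOrder σ] [Field K] (i : ℕ) : Type :=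
  {s : Finset σ // s.card = i} → MvPolynomial σ K

/-- The Koszul differential `K_{i+1} → K_i`. -/
noncomputable def KD (i : ℕ) (f : KChain σ K (i + 1)) : KChain σ K i :=
  fun t => ∑ a ∈ (t.1)ᶜ.attach,
    ((-1 : K) ^ (t.1.filter (fun b => b < a.1)).card) •
      (X a.1 * f ⟨insert a.1 t.1, by
        rw [Finset.card_insert_of_notMem (Finset.mem_compl.mp a.2), t.2]⟩)

/-- The `K`-subspace of Koszul `i`-cycles with coefficients in a `K`-subspace `V ⊆ S`. -/
noncomputable def KZ (V : Submodule K (MvPolynomial σ K)) (i : ℕ) :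
    Submodule K (KChain σ K i) where
  carrier := {f | (∀ s, f s ∈ V) ∧
    ∀ (t : Finset σ) (ht : t.card + 1 = i),
      ∑ a ∈ tᶜ.attach,
        ((-1 : K) ^ (t.filter (fun b => b < a.1)).card) •
          (X a.1 * f ⟨insert a.1 t, by
            rw [Finset.card_insert_of_notMem (Finset.mem_compl.mp a.2)]; exact ht⟩) = 0}
  zero_mem' := by
    refine ⟨fun s => zero_mem V, fun t ht => ?_⟩
    simp
  add_mem' := by
    rintro f g ⟨hf1, hf2⟩ ⟨hg1, hg2⟩
    refine ⟨fun s => add_mem (hf1 s) (hg1 s), fun t ht => ?_⟩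
    simp only [Pi.add_apply, mul_add, smul_add, Finset.sum_add_distrib,
      hf2 t ht, hg2 t ht, add_zero]
  smul_mem' := by
    rintro c f ⟨hf1, hf2⟩
    refine ⟨fun s => Submodule.smul_mem V c (hf1 s), fun t ht => ?_⟩
    have h := hf2 t ht
    calc ∑ a ∈ tᶜ.attach,
        ((-1 : K) ^ (t.filter (fun b => b < a.1)).card) •
          (X a.1 * (c • f) ⟨insert a.1 t, by
            rw [Finset.card_insert_of_notMem (Finset.mem_compl.mp a.2)]; exact ht⟩)
        = c • ∑ a ∈ tᶜ.attach,
          ((-1 : K) ^ (t.filter (fun b => b < a.1)).card) •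
            (X a.1 * f ⟨insert a.1 t, by
              rw [Finset.card_insert_of_notMem (Finset.mem_compl.mp a.2)]; exact ht⟩) := by
          rw [Finset.smul_sum]
          refine Finset.sum_congr rfl fun a _ => ?_
          rw [Pi.smul_apply, mul_smul_comm, smul_comm]
      _ = 0 := by rw [h, smul_zero]

/-- The `K`-subspace of Koszul `i`-boundaries coming from `(i+1)`-chains with coefficients
in a `K`-subspace `W ⊆ S`. -/
noncomputable def KB (W : Submodule K (MvPolynomial σ K)) (i : ℕ) :
    Submodule K (KChain σ K i) :=
  Submodule.span K (KD i '' {f | ∀ s, f s ∈ W})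

/-- The dimension of the `i`-th Koszul homology of the subcomplex of Koszul chains with
coefficients in `V i` in homological degree `i`. -/
noncomputable def koszulBetti (V : ℕ → Submodule K (MvPolynomial σ K)) (i : ℕ) : Cardinal :=
  Module.rank K
    (↥(KZ (V i) i) ⧸ (Submodule.comap (KZ (V i) i).subtype (KB (V (i + 1)) i)))

/-- The `i`-th total Betti number `β_i(I) = dim_K Tor_i^S(I, K)` of an ideal `I`, computed
as the `i`-th Koszul homology of `I`. -/
noncomputable def betti (I : Ideal (MvPolynomial σ K)) (i : ℕ) : Cardinal :=
  koszulBetti (fun _ => I.restrictScalars K) i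

/-- The graded Betti number `β_{ij}(I) = dim_K Tor_i^S(I, K)_j` of an ideal `I`, computed as
the degree-`j` strand of the `i`-th Koszul homology of `I` (the Koszul generator `e_{l_1} ∧ ⋯
∧ e_{l_k}` sits in internal degree `k`, so the coefficients in homological degree `k` lie in
the degree `j - k` component of `I`). -/
noncomputable def bettiGr (I : Ideal (MvPolynomial σ K)) (i j : ℕ) : Cardinal :=
  koszulBetti (fun k => hdeg I ((j : ℤ) - (k : ℤ))) i

/-- A homogeneous ideal `I` is *Gotzmann* if `β_{ij}(I) = β_{ij}(I^lex)` for all `i, j`, where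
`I^lex` is the (unique) lexsegment ideal with the same Hilbert function as `I`. -/
def IsGotzmann (I : Ideal (MvPolynomial σ K)) : Prop :=
  ∀ L : Ideal (MvPolynomial σ K), IsLexsegment L → HilbertEq I L →
    ∀ i j : ℕ, bettiGr I i j = bettiGr L i j

/-- `I_{⟨j⟩}`: the ideal generated by the degree-`j` homogeneous elements of `I`. -/
noncomputable def componentIdeal (I : Ideal (MvPolynomial σ K)) (j : ℕ) : Ideal (MvPolynomial σ K) :=
  Ideal.span {p | p ∈ I ∧ p.IsHomogeneous j}

/-- A homogeneous ideal `I` is *componentwise linear* if for each `j` the ideal `I_{⟨j⟩}` has a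
linear resolution, i.e. its graded Betti numbers `β_{ik}` vanish for `k ≠ i + j`. -/
def IsComponentwiseLinear (I : Ideal (MvPolynomial σ K)) : Prop :=
  ∀ j i k : ℕ, k ≠ i + j → bettiGr (componentIdeal I j) i k = 0

/-- `u <_revlex v` in the degree reverse lexicographic order induced by `x_1 > ⋯ > x_n`:
either `deg u < deg v`, or the degrees agree and at the *largest* index where the exponent
vectors differ, `u` has the larger exponent. -/
def revlexLt (u v : σ →₀ ℕ) : Prop :=
  (edeg u < edeg v) ∨
    (edeg u = edeg v ∧ ∃ i : σ, v i < u i ∧ ∀ j : σ, i < j → u j = v j)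

/-- `d` is the exponent vector of the leading monomial of `p` for the revlex order. -/
def IsLeadMonomial (p : MvPolynomial σ K) (d : σ →₀ ℕ) : Prop :=
  d ∈ p.support ∧ ∀ e ∈ p.support, e ≠ d → revlexLt e d

/-- The initial ideal with respect to the reverse lexicographic order. -/
noncomputable def initialIdeal (I : Ideal (MvPolynomial σ K)) : Ideal (MvPolynomial σ K) :=
  Ideal.span {q | ∃ p ∈ I, ∃ d : σ →₀ ℕ, IsLeadMonomial p d ∧ q = monomial d (1 : K)}

/-- The linear change of coordinates associated to a matrix `g`. -/
noncomputable def linChange (g : Matrix (Fin n) (Fin n) K) :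
    MvPolynomial (Fin n) K →ₐ[K] MvPolynomial (Fin n) K :=
  aeval fun i => ∑ j, g i j • X j

/-- `J = Gin(I)`, the generic initial ideal of `I` with respect to the reverse lexicographic
order: `J = in(g·I)` for all `g` in a nonempty Zariski-open subset of `GL_n(K)`. -/
def IsGin (I J : Ideal (MvPolynomial (Fin n) K)) : Prop :=
  ∃ f : MvPolynomial (Fin n × Fin n) K,
    (∃ g : Matrix (Fin n) (Fin n) K, IsUnit g.det ∧ eval (fun p => g p.1 p.2) f ≠ 0) ∧
    ∀ g : Matrix (Fin n) (Fin n) K, IsUnit g.det →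
      eval (fun p => g p.1 p.2) f ≠ 0 →
        initialIdeal (Ideal.map (linChange g) I) = J

/-- `grade I = g`: `I` contains a regular sequence (on `S`) of length `g` and none of
length `g + 1`. -/
def HasGrade (I : Ideal (MvPolynomial σ K)) (g : ℕ) : Prop :=
  (∃ rs : List (MvPolynomial σ K), rs.length = g ∧ (∀ r ∈ rs, r ∈ I) ∧
      RingTheory.Sequence.IsRegular (MvPolynomial σ K) rs) ∧
    ¬ ∃ rs : List (MvPolynomial σ K), rs.length = g + 1 ∧ (∀ r ∈ rs, r ∈ I) ∧
      RingTheory.Sequence.IsRegular (MvPolynomial σ K) rs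

open CategoryTheory in
/-- The projective dimension of a module is at most `p`: there is a projective resolution
vanishing beyond `p`. -/
def ProjDimLE {R : Type} [CommRing R] (M : ModuleCat R) (p : ℕ) : Prop :=
  ∃ P : ProjectiveResolution M, ∀ i : ℕ, p < i → Limits.IsZero (P.complex.X i)

/-- The projective dimension of a module equals `p`. -/
def ProjDimEq {R : Type} [CommRing R] (M : ModuleCat R) (p : ℕ) : Prop :=
  ProjDimLE M p ∧ ∀ q : ℕ, q < p → ¬ ProjDimLE M q

/-- `I` is a complete intersection: it is generated by a regular sequence. -/
def IsCompleteIntersection (I : Ideal (MvPolynomial σ K)) : Prop :=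
  ∃ rs : List (MvPolynomial σ K),
    RingTheory.Sequence.IsRegular (MvPolynomial σ K) rs ∧ I = Ideal.ofList rs


lemma edeg_fintype {n : ℕ} (d : Fin n →₀ ℕ) : edeg d = ∑ i, d i := by
  rw [edeg, Finsupp.sum_fintype]
  intro _; rfl

lemma edeg_strict_mono {n : ℕ} {e w : Fin n →₀ ℕ} (h : e ≤ w) (hne : e ≠ w) :
    edeg e < edeg w := by
  rw [edeg_fintype, edeg_fintype]
  have hpt : ∀ i, e i ≤ w i := Finsupp.le_def.mp h
  have : ∃ i, e i < w i := by
    by_contra hc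
    push_neg at hc
    exact hne (Finsupp.ext fun i => le_antisymm (hpt i) (hc i))
  obtain ⟨i, hi⟩ := this
  exact Finset.sum_lt_sum (fun j _ => hpt j) ⟨i, Finset.mem_univ i, hi⟩

lemma exists_minGen_le {K : Type} [Field K] {n : ℕ} (I : Ideal (MvPolynomial (Fin n) K))
    (w : Fin n →₀ ℕ) (hw : monomial w (1 : K) ∈ I) : ∃ v ∈ minGens I, v ≤ w := by
  generalize hN : edeg w = N
  induction N using Nat.strong_induction_on generalizing w with
  | _ N ih =>
    by_cases hmin : ∀ e ≤ w, e ≠ w → monomial e (1 : K) ∉ I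
    · exact ⟨w, ⟨hw, hmin⟩, le_refl w⟩
    · push_neg at hmin
      obtain ⟨e, hew, hne, heI⟩ := hmin
      have hlt : edeg e < N := hN ▸ edeg_strict_mono hew hne
      obtain ⟨v, hv, hvle⟩ := ih (edeg e) hlt e heI rfl
      exact ⟨v, hv, hvle.trans hew⟩

lemma minGens_antichain {K : Type} [Field K] {n : ℕ} (I : Ideal (MvPolynomial (Fin n) K)) :
    IsAntichain (· ≤ ·) (minGens I) := by
  intro d hd e he hne hle
  exact he.2 d hle hne hd.1

lemma minGens_finite {K : Type} [Field K] {n : ℕ} (I : Ideal (MvPolynomial (Fin n) K)) :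
    (minGens I).Finite :=
  (minGens_antichain I).finite_of_partiallyWellOrderedOn (Set.isPWO_of_wellQuasiOrderedLE _)

/-- Let `I` be a stable monomial ideal of `S = K[x_1,…,x_n]`.  Then
`max{ m(u) : u ∈ G(I) } ≤ |G(I)|`. -/
theorem stable_mdeg_le_card_minGens {K : Type} [Field K] {n : ℕ}
    (I : Ideal (MvPolynomial (Fin n) K)) (hI : IsStable I) :
    ∀ u ∈ minGens I, mdeg u ≤ (minGens I).ncard := by
  intro u hu
  rcases Finset.eq_empty_or_nonempty u.support with hsup | hsup
  · simp [mdeg, hsup]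
  -- let j be the largest index in the support of u
  set j : Fin n := u.support.max' hsup with hj
  have hjmem : j ∈ u.support := u.support.max'_mem hsup
  have hjmax : ∀ k ∈ u.support, k ≤ j := fun k hk => u.support.le_max' k hk
  have hmdeg : mdeg u = (j : ℕ) + 1 := by
    unfold mdeg
    apply le_antisymm
    · exact Finset.sup_le fun i hi =>
        Nat.add_le_add_right (Fin.le_iff_val_le_val.mp (hjmax i hi)) 1
    · exact Finset.le_sup (f := fun i : Fin n => (i : ℕ) + 1) hjmem
  have huj : 1 ≤ u j := Finsupp.mem_support_iff.mp hjmem |> Nat.one_le_iff_ne_zero.mpr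
  -- for each i < j, produce a minimal generator v with v i = u i + 1 and v ≤ w i
  have hstep : ∀ i : Fin n, i < j →
      ∃ v ∈ minGens I, v ≤ u + Finsupp.single i 1 - Finsupp.single j 1 ∧ v i = u i + 1 := by
    intro i hij
    have hwI := hI.2 u hu.1 j hjmem hjmax i hij
    obtain ⟨v, hv, hvle⟩ := exists_minGen_le I _ hwI
    have hij' : i ≠ j := ne_of_lt hij
    have hwi : ((u + Finsupp.single i 1 - Finsupp.single j 1 : Fin n →₀ ℕ)) i = u i + 1 := by
      rw [Finsupp.tsub_apply, Finsupp.add_apply, Finsupp.single_eq_same,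
        Finsupp.single_eq_of_ne' (fun h => hij' h.symm)]
      omega
    have hwj : ((u + Finsupp.single i 1 - Finsupp.single j 1 : Fin n →₀ ℕ)) j = u j - 1 := by
      rw [Finsupp.tsub_apply, Finsupp.add_apply, Finsupp.single_eq_same,
        Finsupp.single_eq_of_ne' hij']
      omega
    have hwk : ∀ k : Fin n, k ≠ i → k ≠ j →
        ((u + Finsupp.single i 1 - Finsupp.single j 1 : Fin n →₀ ℕ)) k = u k := by
      intro k hki hkj
      rw [Finsupp.tsub_apply, Finsupp.add_apply,
        Finsupp.single_eq_of_ne' (fun h => hki h.symm),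
        Finsupp.single_eq_of_ne' (fun h => hkj h.symm)]
      omega
    refine ⟨v, hv, hvle, ?_⟩
    have hvi : v i ≤ u i + 1 := hwi ▸ Finsupp.le_def.mp hvle i
    by_contra hcon
    have hvi' : v i ≤ u i := by omega
    have hvleu : v ≤ u := by
      rw [Finsupp.le_def]
      intro k
      by_cases hki : k = i
      · subst hki; exact hvi'
      by_cases hkj : k = j
      · have := Finsupp.le_def.mp hvle k
        rw [hkj, hwj] at this
        rw [hkj]; omega
      · have := Finsupp.le_def.mp hvle k
        rw [hwk k hki hkj] at this; exact this
    have hvne : v ≠ u := by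
      intro h
      have := Finsupp.le_def.mp hvle j
      rw [hwj, h] at this; omega
    exact hu.2 v hvleu hvne hv.1
  choose! V hV1 hV2 hV3 using hstep
  -- the map sending i < j to V i and j to u is injective on Iic j with image in minGens
  set F : Fin n → (Fin n →₀ ℕ) := fun i => if i < j then V i else u with hF
  have hFmem : ∀ i ∈ Set.Iic j, F i ∈ minGens I := by
    intro i hi
    by_cases h : i < j
    · simp only [hF, if_pos h]; exact hV1 i h
    · simp only [hF, if_neg h]; exact hu
  have key : ∀ a b : Fin n, a < b → b ≤ j → F a ≠ F b := by
    intro a b hlt hbj hab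
    have haj : a < j := lt_of_lt_of_le hlt hbj
    have hFa : F a = V a := by simp only [hF, if_pos haj]
    have hFa_a : V a a = u a + 1 := hV3 a haj
    by_cases hbltj : b < j
    · -- both < j : compare values at a
      have hFb : F b = V b := by simp only [hF, if_pos hbltj]
      have hVb_le := Finsupp.le_def.mp (hV2 b hbltj) a
      have hval : ((u + Finsupp.single b 1 - Finsupp.single j 1 : Fin n →₀ ℕ)) a = u a := by
        rw [Finsupp.tsub_apply, Finsupp.add_apply,
          Finsupp.single_eq_of_ne' (ne_of_gt hlt),
          Finsupp.single_eq_of_ne' (ne_of_gt haj)]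
        omega
      rw [hval] at hVb_le
      have : V a a = V b a := by rw [← hFa, ← hFb, hab]
      omega
    · -- b = j : F b = u, compare values at j
      have hbj' : b = j := le_antisymm hbj (not_lt.mp hbltj)
      have hFb : F b = u := by simp only [hF, if_neg hbltj]
      have hVa_le := Finsupp.le_def.mp (hV2 a haj) j
      have hval : ((u + Finsupp.single a 1 - Finsupp.single j 1 : Fin n →₀ ℕ)) j = u j - 1 := by
        rw [Finsupp.tsub_apply, Finsupp.add_apply,
          Finsupp.single_eq_of_ne' (ne_of_lt haj), Finsupp.single_eq_same]
        omega
      rw [hval] at hVa_le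
      have : V a j = u j := by rw [← hFa, hab, hFb]
      omega
  have hFinj : Set.InjOn F (Set.Iic j) := by
    intro a ha b hb hab
    rcases lt_trichotomy a b with h | h | h
    · exact absurd hab (key a b h hb)
    · exact h
    · exact absurd hab.symm (key b a h ha)
  have hsub : F '' (Set.Iic j) ⊆ minGens I := by
    rintro _ ⟨i, hi, rfl⟩; exact hFmem i hi
  have hcard : (F '' (Set.Iic j)).ncard = (j : ℕ) + 1 := by
    rw [Set.ncard_image_of_injOn hFinj]
    rw [← Finset.coe_Iic, Set.ncard_coe_finset, Fin.card_Iic]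
  calc mdeg u = (j : ℕ) + 1 := hmdeg
    _ = (F '' (Set.Iic j)).ncard := hcard.symm
    _ ≤ (minGens I).ncard := Set.ncard_le_ncard hsub (minGens_finite I)

end Formalization
end

section
/- Let I be a stable monomial ideal of S = K[x_1,...,x_n] with max{ m(u) : u ∈ G(I) } = |G(I)|. Then I is a Gotzmann ideal and |G(I)| ≤ n. -/
/-!
Background definitions: monomial ideals, minimal monomial generators, stable / lexsegment /
universal lexsegment ideals, (graded) Betti numbers `β_{i}` and `β_{ij}` of an ideal
(via Koszul homology, using `Tor_i^S(M,K) ≅ H_i(x_1,…,x_n; M)` as graded vector spaces),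
Gotzmann and componentwise linear ideals, generic initial ideals, grade and
projective dimension.
-/

open MvPolynomial

namespace Formalization

variable {K : Type} [Field K] {σ : Type} [Fintype σ] [LinearOrder σ] {n : ℕ}

/-! ### Auxiliary lemmas for the proof -/

section Aux

set_option linter.unusedSectionVars false

lemma aux_edeg_eq_sum (d : σ →₀ ℕ) : edeg d = ∑ i, d i :=
  Finsupp.sum_fintype _ _ (fun _ => rfl)

lemma aux_coord_le_edeg (d : σ →₀ ℕ) (i : σ) : d i ≤ edeg d := by
  rw [aux_edeg_eq_sum]
  exact Finset.single_le_sum (fun _ _ => Nat.zero_le _) (Finset.mem_univ i)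

lemma aux_edeg_lt_of_lt {e d : σ →₀ ℕ} (h : e ≤ d) (hne : e ≠ d) : edeg e < edeg d := by
  rw [aux_edeg_eq_sum, aux_edeg_eq_sum]
  have hle := Finsupp.le_def.mp h
  obtain ⟨i, hi⟩ : ∃ i, e i ≠ d i := by
    by_contra hc; push_neg at hc; exact hne (Finsupp.ext hc)
  exact Finset.sum_lt_sum (fun k _ => hle k) ⟨i, Finset.mem_univ i, lt_of_le_of_ne (hle i) hi⟩

lemma aux_edeg_eq_degree (d : σ →₀ ℕ) : edeg d = d.degree := rfl

lemma aux_mem_of_le {I : Ideal (MvPolynomial σ K)} {a d : σ →₀ ℕ} (h : a ≤ d)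
    (ha : monomial a (1 : K) ∈ I) : monomial d (1 : K) ∈ I := by
  have : monomial d (1 : K) = monomial (d - a) (1 : K) * monomial a 1 := by
    rw [monomial_mul, one_mul, tsub_add_cancel_of_le h]
  rw [this]
  exact Ideal.mul_mem_left _ _ ha

lemma aux_exists_minGen_le {I : Ideal (MvPolynomial σ K)} {d : σ →₀ ℕ}
    (hd : monomial d (1 : K) ∈ I) : ∃ a ∈ minGens I, a ≤ d := by
  obtain ⟨N, hN⟩ : ∃ N, edeg d ≤ N := ⟨edeg d, le_rfl⟩
  induction N generalizing d with
  | zero =>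
      refine ⟨d, ⟨hd, fun e he hne hemem => ?_⟩, le_rfl⟩
      have := aux_edeg_lt_of_lt he hne; omega
  | succ N ih =>
      by_cases hmin : ∀ e : σ →₀ ℕ, e ≤ d → e ≠ d → monomial e (1 : K) ∉ I
      · exact ⟨d, ⟨hd, hmin⟩, le_rfl⟩
      · push_neg at hmin
        obtain ⟨e, he, hne, hemem⟩ := hmin
        have hlt := aux_edeg_lt_of_lt he hne
        obtain ⟨a, ha, hae⟩ := ih hemem (by omega)
        exact ⟨a, ha, hae.trans he⟩

lemma aux_le_of_mem_support_span {A : Set (σ →₀ ℕ)} {p : MvPolynomial σ K}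
    (hp : p ∈ Ideal.span ((fun d => monomial d (1 : K)) '' A)) :
    ∀ d ∈ p.support, ∃ a ∈ A, a ≤ d := by
  classical
  refine Submodule.span_induction ?_ ?_ ?_ ?_ hp
  · rintro x ⟨a, ha, rfl⟩ d hd
    rw [support_monomial, if_neg one_ne_zero] at hd
    rw [Finset.mem_singleton] at hd
    exact ⟨a, ha, hd ▸ le_rfl⟩
  · intro d hd; simp at hd
  · intro x y _ _ hx hy d hd
    rcases Finset.mem_union.mp (MvPolynomial.support_add hd) with h | h
    · exact hx d h
    · exact hy d h
  · intro r x _ hx d hd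
    rw [smul_eq_mul] at hd
    obtain ⟨d1, hd1, d2, hd2, rfl⟩ := Finset.mem_add.mp (MvPolynomial.support_mul _ _ hd)
    obtain ⟨a, ha, hale⟩ := hx d2 hd2
    exact ⟨a, ha, hale.trans le_add_self⟩

lemma aux_monomial_mem_of_mem_support {I : Ideal (MvPolynomial σ K)} (hI : IsMonomialIdeal I)
    {p : MvPolynomial σ K} (hp : p ∈ I) {d : σ →₀ ℕ} (hd : d ∈ p.support) :
    monomial d (1 : K) ∈ I := by
  obtain ⟨A, rfl⟩ := hI
  obtain ⟨a, ha, hale⟩ := aux_le_of_mem_support_span hp d hd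
  exact aux_mem_of_le hale (Ideal.subset_span ⟨a, ha, rfl⟩)

lemma aux_monomialIdeal_eq_span {I : Ideal (MvPolynomial σ K)} (hI : IsMonomialIdeal I) :
    I = Ideal.span ((fun d => monomial d (1 : K)) '' {d | monomial d (1 : K) ∈ I}) := by
  apply le_antisymm
  · obtain ⟨A, hA⟩ := hI
    nth_rewrite 1 [hA]
    apply Ideal.span_mono
    rintro x ⟨a, ha, rfl⟩
    exact ⟨a, by rw [hA]; exact Ideal.subset_span ⟨a, ha, rfl⟩, rfl⟩
  · rw [Ideal.span_le]
    rintro x ⟨a, ha, rfl⟩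
    exact ha

/-- The set of exponents of the degree-`t` monomials of `I`. -/
def auxDegSet (I : Ideal (MvPolynomial σ K)) (t : ℕ) : Set (σ →₀ ℕ) :=
  {d | monomial d (1 : K) ∈ I ∧ edeg d = t}

lemma aux_degSet_finite (I : Ideal (MvPolynomial σ K)) (t : ℕ) : (auxDegSet I t).Finite := by
  apply Set.Finite.subset (Set.finite_Iic (Finsupp.equivFunOnFinite.symm (fun _ : σ => t)))
  intro d hd
  obtain ⟨-, ht⟩ := hd
  rw [Set.mem_Iic, Finsupp.le_def]
  intro i
  have := aux_coord_le_edeg d i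
  show d i ≤ t
  omega

lemma aux_mem_hdeg_iff {I : Ideal (MvPolynomial σ K)} {d : ℤ} {p : MvPolynomial σ K} :
    p ∈ hdeg I d ↔ (p = 0 ∨ (p ∈ I ∧ ∃ e : ℕ, (e : ℤ) = d ∧ p.IsHomogeneous e)) := Iff.rfl

lemma aux_hdeg_eq_span {I : Ideal (MvPolynomial σ K)} (hI : IsMonomialIdeal I) (t : ℕ) :
    hdeg I (t : ℤ) = Submodule.span K ((fun d => monomial d (1 : K)) '' auxDegSet I t) := by
  apply le_antisymm
  · intro p hp
    rcases aux_mem_hdeg_iff.mp hp with rfl | ⟨hpI, e, he, hpe⟩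
    · exact Submodule.zero_mem _
    obtain rfl : e = t := by exact_mod_cast he
    have hrep : p = ∑ v ∈ p.support, (coeff v p) • monomial v (1 : K) := by
      conv_lhs => rw [p.as_sum]
      refine Finset.sum_congr rfl fun v _ => ?_
      rw [smul_monomial, smul_eq_mul, mul_one]
    rw [hrep]
    refine Submodule.sum_mem _ fun v hv => Submodule.smul_mem _ _ (Submodule.subset_span ?_)
    refine ⟨v, ⟨aux_monomial_mem_of_mem_support hI hpI hv, ?_⟩, rfl⟩
    rw [aux_edeg_eq_degree, Finsupp.degree_eq_weight_one]
    exact hpe (mem_support_iff.mp hv)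
  · rw [Submodule.span_le]
    rintro x ⟨a, ⟨haI, hat⟩, rfl⟩
    refine aux_mem_hdeg_iff.mpr (Or.inr ⟨haI, t, rfl, isHomogeneous_monomial _ ?_⟩)
    rw [← aux_edeg_eq_degree, hat]

lemma aux_rank_hdeg {I : Ideal (MvPolynomial σ K)} (hI : IsMonomialIdeal I) (t : ℕ) :
    Module.rank K (hdeg I (t : ℤ)) = Cardinal.mk (auxDegSet I t) := by
  rw [aux_hdeg_eq_span hI t, rank_span_set]
  · exact Cardinal.mk_image_eq (monomial_left_injective one_ne_zero)
  · refine (fun h hs => LinearIndepOn.mono (t := (fun d => monomial d (1 : K)) '' auxDegSet I t)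
      (s := Set.range fun d : σ →₀ ℕ => monomial d (1 : K)) hs h) ?_ ?_
    · exact Set.image_subset_range _ _
    · have := (basisMonomials σ K).linearIndependent
      rw [coe_basisMonomials] at this
      exact (linearIndepOn_id_range_iff (monomial_left_injective one_ne_zero)).mpr this

lemma aux_lex_trichotomy {u v : σ →₀ ℕ} (h : u ≠ v) : lexLt u v ∨ lexLt v u := by
  classical
  set D : Finset σ := (u.support ∪ v.support).filter (fun i => u i ≠ v i) with hD
  have hne : D.Nonempty := by
    obtain ⟨i, hi⟩ : ∃ i, u i ≠ v i := by
      by_contra hc; push_neg at hc; exact h (Finsupp.ext hc)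
    refine ⟨i, Finset.mem_filter.mpr ⟨?_, hi⟩⟩
    rcases Nat.eq_zero_or_pos (u i) with h0 | hpos
    · exact Finset.mem_union_right _ (Finsupp.mem_support_iff.mpr (by omega))
    · exact Finset.mem_union_left _ (Finsupp.mem_support_iff.mpr (by omega))
  set i0 := D.min' hne
  have hi0 : u i0 ≠ v i0 := (Finset.mem_filter.mp (D.min'_mem hne)).2
  have hbelow : ∀ j, j < i0 → u j = v j := by
    intro j hj
    by_contra hc
    have hjD : j ∈ D := by
      refine Finset.mem_filter.mpr ⟨?_, hc⟩
      rcases Nat.eq_zero_or_pos (u j) with h0 | hpos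
      · exact Finset.mem_union_right _ (Finsupp.mem_support_iff.mpr (by omega))
      · exact Finset.mem_union_left _ (Finsupp.mem_support_iff.mpr (by omega))
    exact absurd (D.min'_le j hjD) (not_le.mpr hj)
  rcases lt_or_gt_of_ne hi0 with hlt | hgt
  · exact Or.inl ⟨i0, hbelow, hlt⟩
  · exact Or.inr ⟨i0, fun j hj => (hbelow j hj).symm, hgt⟩

lemma aux_upset_subset {S T : Set (σ →₀ ℕ)} {t : ℕ}
    (hSdeg : ∀ d ∈ S, edeg d = t) (hTdeg : ∀ d ∈ T, edeg d = t)
    (hSup : ∀ d ∈ S, ∀ e, edeg e = t → lexLt d e → e ∈ S)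
    (hTup : ∀ d ∈ T, ∀ e, edeg e = t → lexLt d e → e ∈ T) :
    S ⊆ T ∨ T ⊆ S := by
  by_cases hST : S ⊆ T
  · exact Or.inl hST
  · right
    obtain ⟨x, hxS, hxT⟩ := Set.not_subset.mp hST
    intro y hyT
    rcases eq_or_ne y x with rfl | hne
    · exact absurd hyT hxT
    rcases aux_lex_trichotomy hne with hlt | hgt
    · exact absurd (hTup y hyT x (hSdeg x hxS) hlt) hxT
    · exact hSup x hxS y (hTdeg y hyT) hgt

/-- Two lexsegment ideals with the same Hilbert function coincide. -/
lemma aux_lex_eq_of_hilbert {I L : Ideal (MvPolynomial σ K)} (hI : IsLexsegment I)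
    (hL : IsLexsegment L) (hH : HilbertEq I L) : I = L := by
  have hset : ∀ t : ℕ, auxDegSet I t = auxDegSet L t := by
    intro t
    have hcard : (auxDegSet I t).ncard = (auxDegSet L t).ncard := by
      have h1 := hH t
      rw [aux_rank_hdeg hI.1 t, aux_rank_hdeg hL.1 t] at h1
      have h2 := congrArg Cardinal.toNat h1
      rwa [← Nat.card, ← Nat.card, Nat.card_coe_set_eq, Nat.card_coe_set_eq] at h2
    have hup : ∀ (J : Ideal (MvPolynomial σ K)), IsLexsegment J →
        ∀ d ∈ auxDegSet J t, ∀ e, edeg e = t → lexLt d e → e ∈ auxDegSet J t := by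
      rintro J hJ d ⟨hdJ, hdt⟩ e het hlt
      exact ⟨hJ.2 d e hdJ (by omega) (Or.inl hlt), het⟩
    rcases aux_upset_subset (fun d hd => hd.2) (fun d hd => hd.2) (hup I hI) (hup L hL)
        with h | h
    · exact Set.eq_of_subset_of_ncard_le h hcard.ge (aux_degSet_finite L t)
    · exact (Set.eq_of_subset_of_ncard_le h hcard.le (aux_degSet_finite I t)).symm
  have hsets : {d : σ →₀ ℕ | monomial d (1 : K) ∈ I} = {d | monomial d (1 : K) ∈ L} := by
    ext d
    constructor <;> intro hd
    · exact (Set.ext_iff.mp (hset (edeg d)) d |>.mp ⟨hd, rfl⟩).1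
    · exact (Set.ext_iff.mp (hset (edeg d)) d |>.mpr ⟨hd, rfl⟩).1
  rw [aux_monomialIdeal_eq_span hI.1, aux_monomialIdeal_eq_span hL.1, hsets]

lemma aux_swap_apply {i j : σ} (hij : i ≠ j) (d : σ →₀ ℕ) (k : σ) :
    ((d + Finsupp.single i 1 - Finsupp.single j 1 : σ →₀ ℕ)) k
      = if k = i then d i + 1 else if k = j then d j - 1 else d k := by
  classical
  rw [Finsupp.tsub_apply, Finsupp.add_apply, Finsupp.single_apply, Finsupp.single_apply]
  rcases eq_or_ne k i with rfl | hki
  · rw [if_pos rfl, if_pos rfl, if_neg (fun h : j = k => hij h.symm)]; omega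
  · rw [if_neg (fun h : i = k => hki h.symm), if_neg hki]
    rcases eq_or_ne k j with rfl | hkj
    · rw [if_pos rfl, if_pos rfl]; omega
    · rw [if_neg (fun h : j = k => hkj h.symm), if_neg hkj]; omega

/-- Iterated stability swaps: all the exponents above `p` can be pushed into `x_p`. -/
lemma aux_collapse {I : Ideal (MvPolynomial σ K)}
    (hst : ∀ d : σ →₀ ℕ, monomial d (1 : K) ∈ I →
      ∀ j ∈ d.support, (∀ k ∈ d.support, k ≤ j) →
        ∀ i : σ, i < j →
          monomial (d + Finsupp.single i 1 - Finsupp.single j 1) (1 : K) ∈ I)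
    (p : σ) (N : ℕ)
    (d : σ →₀ ℕ) (hd : monomial d (1 : K) ∈ I) (hN : (∑ k, if p < k then d k else 0) ≤ N) :
    ∃ d', monomial d' (1 : K) ∈ I ∧ (∀ k, k < p → d' k = d k) ∧ (∀ k, p < k → d' k = 0) := by
  classical
  induction N generalizing d with
  | zero =>
      refine ⟨d, hd, fun k _ => rfl, fun k hk => ?_⟩
      have h0 : ∀ k ∈ Finset.univ, (if p < k then d k else 0) = 0 :=
        Finset.sum_eq_zero_iff.mp (Nat.le_zero.mp hN)
      have := h0 k (Finset.mem_univ k)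
      rwa [if_pos hk] at this
  | succ N ih =>
      by_cases hz : ∀ k, p < k → d k = 0
      · exact ⟨d, hd, fun k _ => rfl, hz⟩
      push_neg at hz
      obtain ⟨k, hpk, hk0⟩ := hz
      have hksupp : k ∈ d.support := Finsupp.mem_support_iff.mpr hk0
      have hne : d.support.Nonempty := ⟨k, hksupp⟩
      set j := d.support.max' hne with hj
      have hjsupp : j ∈ d.support := d.support.max'_mem hne
      have hjmax : ∀ l ∈ d.support, l ≤ j := fun l hl => d.support.le_max' l hl
      have hpj : p < j := lt_of_lt_of_le hpk (hjmax k hksupp)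
      have hpj' : p ≠ j := ne_of_lt hpj
      set d1 := d + Finsupp.single p 1 - Finsupp.single j 1 with hd1
      have hd1mem : monomial d1 (1 : K) ∈ I := hst d hd j hjsupp hjmax p hpj
      have hd1app : ∀ l, d1 l = if l = p then d p + 1 else if l = j then d j - 1 else d l :=
        aux_swap_apply hpj' d
      have hdj : 1 ≤ d j := Nat.one_le_iff_ne_zero.mpr (Finsupp.mem_support_iff.mp hjsupp)
      have hmass : (∑ l, if p < l then d1 l else 0) ≤ N := by
        have e0 : (∑ l, if p < l then d l else 0)
            = (∑ l ∈ Finset.univ.erase j, if p < l then d l else 0) + d j := by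
          rw [← Finset.sum_erase_add _ _ (Finset.mem_univ j), if_pos hpj]
        have e1 : (∑ l, if p < l then d1 l else 0)
            = (∑ l ∈ Finset.univ.erase j, if p < l then d l else 0) + (d j - 1) := by
          rw [← Finset.sum_erase_add _ _ (Finset.mem_univ j), if_pos hpj]
          congr 1
          · refine Finset.sum_congr rfl fun l hl => ?_
            have hlj : l ≠ j := (Finset.mem_erase.mp hl).1
            rcases eq_or_ne l p with rfl | hlp
            · rw [if_neg (lt_irrefl _), if_neg (lt_irrefl _)]
            · rw [hd1app l, if_neg hlp, if_neg hlj]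
          · rw [hd1app j, if_neg (Ne.symm hpj'), if_pos rfl]
        omega
      obtain ⟨d', hmem, hlo, hhi⟩ := ih d1 hd1mem hmass
      refine ⟨d', hmem, fun l hl => ?_, hhi⟩
      rw [hlo l hl, hd1app l, if_neg (ne_of_lt hl), if_neg (ne_of_lt (lt_trans hl hpj))]

/-- The main structural result: a stable monomial ideal with
`max{m(u) : u ∈ G(I)} = |G(I)|` is a lexsegment ideal, and `|G(I)| ≤ n`. -/
theorem aux_stable_structure (I : Ideal (MvPolynomial (Fin n) K)) (hI : IsStable I)
    (hmax : ∃ u ∈ minGens I, mdeg u = (minGens I).ncard) :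
    IsLexsegment I ∧ (minGens I).ncard ≤ n := by
  classical
  obtain ⟨u, hu, hmd⟩ := hmax
  set g := (minGens I).ncard with hg
  have hfin : (minGens I).Finite := by
    by_contra hinf
    have hinf' : (minGens I).Infinite := hinf
    have h0 : g = 0 := hinf'.ncard
    have hu0 : u = 0 := by
      apply Finsupp.support_eq_empty.mp
      by_contra hne
      obtain ⟨i, hi⟩ := Finset.nonempty_iff_ne_empty.mpr hne
      have hsup := Finset.le_sup (f := fun i : Fin n => (i : ℕ) + 1) hi
      have h00 : u.support.sup (fun i : Fin n => (i : ℕ) + 1) = 0 := by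
        rw [show u.support.sup (fun i : Fin n => (i : ℕ) + 1) = mdeg u from rfl, hmd, h0]
      rw [h00] at hsup
      exact Nat.not_succ_le_zero _ hsup
    have hone : monomial (0 : Fin n →₀ ℕ) (1 : K) ∈ I := hu0 ▸ hu.1
    have hsub : minGens I ⊆ {0} := by
      intro d hd
      by_contra hd0
      exact hd.2 0 zero_le (fun h => hd0 (h ▸ rfl)) hone
    exact hinf (Set.Finite.subset (Set.finite_singleton 0) hsub)
  have hgpos : 1 ≤ g := (Set.ncard_pos hfin).mpr ⟨u, hu⟩
  have hne : u.support.Nonempty := by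
    rw [Finset.nonempty_iff_ne_empty]
    intro hemp
    have : mdeg u = 0 := by rw [mdeg, hemp]; rfl
    omega
  set k0 := u.support.max' hne with hk0
  have hk0s : k0 ∈ u.support := u.support.max'_mem hne
  have hk0max : ∀ k ∈ u.support, k ≤ k0 := fun k hk => u.support.le_max' k hk
  have hk0g : (k0 : ℕ) + 1 = g := by
    have h1 : mdeg u = (k0 : ℕ) + 1 := by
      apply le_antisymm
      · exact Finset.sup_le fun i hi => by
          have := hk0max i hi
          simp only [Fin.le_def] at this
          omega
      · exact Finset.le_sup (f := fun i : Fin n => (i : ℕ) + 1) hk0s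
    omega
  have huk0 : 1 ≤ u k0 := Nat.one_le_iff_ne_zero.mpr (Finsupp.mem_support_iff.mp hk0s)
  have hu_above : ∀ k, k0 < k → u k = 0 := by
    intro k hk
    by_contra h
    exact absurd (hk0max k (Finsupp.mem_support_iff.mpr h)) (not_le.mpr hk)
  have hVex : ∀ p : Fin n, p < k0 →
      ∃ a, a ∈ minGens I ∧ a ≤ u + Finsupp.single p 1 - Finsupp.single k0 1 := by
    intro p hp
    obtain ⟨a, h1, h2⟩ := aux_exists_minGen_le (hI.2 u hu.1 k0 hk0s hk0max p hp)
    exact ⟨a, h1, h2⟩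
  choose! v hv1 hv2 using hVex
  have hfacts : ∀ p : Fin n, p < k0 → (v p p = u p + 1) ∧ (∀ k, k ≠ p → v p k ≤ u k) := by
    intro p hp
    have hppk0 : p ≠ k0 := ne_of_lt hp
    have hvle : ∀ k, v p k ≤ ((u + Finsupp.single p 1 - Finsupp.single k0 1 : Fin n →₀ ℕ)) k :=
      Finsupp.le_def.mp (hv2 p hp)
    have hvle_p : v p p ≤ u p + 1 := by
      have h := hvle p
      rwa [aux_swap_apply hppk0 u p, if_pos rfl] at h
    have hvle_k0 : v p k0 ≤ u k0 - 1 := by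
      have h := hvle k0
      rwa [aux_swap_apply hppk0 u k0, if_neg (fun h => hppk0 h.symm), if_pos rfl] at h
    have hoff : ∀ k, k ≠ p → v p k ≤ u k := by
      intro k hk
      rcases eq_or_ne k k0 with rfl | hkk0
      · omega
      · have h := hvle k
        rwa [aux_swap_apply hppk0 u k, if_neg hk, if_neg hkk0] at h
    have hnotle : ¬ v p ≤ u := by
      intro hle'
      rcases eq_or_ne (v p) u with heq | hvne
      · rw [heq] at hvle_k0
        omega
      · exact hu.2 (v p) hle' hvne (hv1 p hp).1
    obtain ⟨k, hk⟩ : ∃ k, u k < v p k := by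
      by_contra hc
      push_neg at hc
      exact hnotle (Finsupp.le_def.mpr hc)
    have hkp : k = p := by
      by_contra hkp
      exact absurd (hoff k hkp) (not_le.mpr hk)
    rw [hkp] at hk
    exact ⟨by omega, hoff⟩
  have hSsub : insert u (v '' Set.Iio k0) ⊆ minGens I := by
    rintro z (rfl | ⟨p, hp, rfl⟩)
    · exact hu
    · exact hv1 p hp
  have hunot : u ∉ v '' Set.Iio k0 := by
    rintro ⟨p, hp, heq⟩
    have := (hfacts p hp).1
    rw [heq] at this
    omega
  have hinj : Set.InjOn v (Set.Iio k0) := by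
    intro p hp q hq hpq
    by_contra hne'
    have h1 := (hfacts p hp).1
    have h2 := (hfacts q hq).2 p (fun h => hne' (h ▸ rfl))
    rw [hpq] at h1
    omega
  have hScard : (insert u (v '' Set.Iio k0)).ncard = g := by
    rw [Set.ncard_insert_of_notMem hunot (Set.toFinite _),
      Set.ncard_image_of_injOn hinj, ← Finset.coe_Iio, Set.ncard_coe_finset, Fin.card_Iio]
    omega
  have hSeq : insert u (v '' Set.Iio k0) = minGens I :=
    Set.eq_of_subset_of_ncard_le hSsub (by rw [hScard]) hfin
  have hGen : ∀ z ∈ minGens I, z = u ∨ ∃ p, p < k0 ∧ z = v p := by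
    intro z hz
    rw [← hSeq] at hz
    rcases hz with rfl | ⟨p, hp, rfl⟩
    · exact Or.inl rfl
    · exact Or.inr ⟨p, hp, rfl⟩
  have hv0 : ∀ p, p < k0 → ∀ k, p < k → v p k = 0 := by
    intro p hp
    obtain ⟨d', hd'mem, hd'lo, hd'hi⟩ := aux_collapse hI.2 p _ u hu.1 le_rfl
    obtain ⟨z, hz, hzle⟩ := aux_exists_minGen_le hd'mem
    have hzvp : z = v p := by
      rcases hGen z hz with rfl | ⟨q, hq, rfl⟩
      · have h := Finsupp.le_def.mp hzle k0
        rw [hd'hi k0 hp] at h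
        omega
      · rcases lt_trichotomy q p with hqp | rfl | hqp
        · have h := Finsupp.le_def.mp hzle q
          rw [hd'lo q hqp] at h
          have := (hfacts q hq).1
          omega
        · rfl
        · have h := Finsupp.le_def.mp hzle q
          rw [hd'hi q hqp] at h
          have := (hfacts q hq).1
          omega
    intro k hk
    have h := Finsupp.le_def.mp hzle k
    rw [hzvp] at h
    rw [hd'hi k hk] at h
    omega
  have hveq : ∀ p, p < k0 → ∀ k, k < p → v p k = u k := by
    intro p hp k hk
    by_contra hneq
    have hlt : v p k < u k :=
      lt_of_le_of_ne ((hfacts p hp).2 k (ne_of_lt hk)) hneq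
    have hvpp : v p p = u p + 1 := (hfacts p hp).1
    have hpsupp : p ∈ (v p).support := Finsupp.mem_support_iff.mpr (by omega)
    have hpmax : ∀ l ∈ (v p).support, l ≤ p := by
      intro l hl
      by_contra hlp
      exact Finsupp.mem_support_iff.mp hl (hv0 p hp l (not_le.mp hlp))
    have hz'mem := hI.2 (v p) (hv1 p hp).1 p hpsupp hpmax k hk
    obtain ⟨y, hy, hyle⟩ := aux_exists_minGen_le hz'mem
    have hkp : k ≠ p := ne_of_lt hk
    have hz'app := aux_swap_apply hkp (v p)
    rcases hGen y hy with rfl | ⟨q, hq, rfl⟩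
    · have h := Finsupp.le_def.mp hyle k0
      rw [hz'app k0, if_neg (fun h => (ne_of_lt (hk.trans hp)) h.symm),
        if_neg (fun h => (ne_of_lt hp) h.symm), hv0 p hp k0 hp] at h
      omega
    · have h := Finsupp.le_def.mp hyle q
      have hq1 := (hfacts q hq).1
      rcases eq_or_ne q k with rfl | hqk
      · rw [hz'app q, if_pos rfl] at h
        omega
      · rcases eq_or_ne q p with rfl | hqp
        · rw [hz'app q, if_neg hqk, if_pos rfl] at h
          omega
        · rw [hz'app q, if_neg hqk, if_neg hqp] at h
          rcases lt_trichotomy q p with h2 | rfl | h2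
          · have := (hfacts p hp).2 q hqp
            omega
          · exact hqp rfl |>.elim
          · rw [hv0 p hp q h2] at h
            omega
  refine ⟨⟨hI.1, ?_⟩, by omega⟩
  intro a b hab hdeg hor
  rcases hor with hlt | rfl
  swap
  · exact hab
  obtain ⟨s, hs_eq, hs_lt⟩ := hlt
  obtain ⟨z, hz, hzle⟩ := aux_exists_minGen_le hab
  have hza := Finsupp.le_def.mp hzle
  have hdone : ∀ w ∈ minGens I, w ≤ b → monomial b (1 : K) ∈ I :=
    fun w hw hwb => aux_mem_of_le hwb hw.1
  have hdiv_v : ∀ q, q < k0 → (∀ k, k < q → u k ≤ b k) → u q + 1 ≤ b q →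
      monomial b (1 : K) ∈ I := by
    intro q hq hbelow hatq
    refine hdone (v q) (hv1 q hq) (Finsupp.le_def.mpr fun k => ?_)
    rcases lt_trichotomy k q with h | heq | h
    · rw [hveq q hq k h]; exact hbelow k h
    · rw [heq, (hfacts q hq).1]; exact hatq
    · rw [hv0 q hq k h]; omega
  have hdiv_u : (∀ k, k ≤ k0 → u k ≤ b k) → monomial b (1 : K) ∈ I := by
    intro hball
    refine hdone u hu (Finsupp.le_def.mpr fun k => ?_)
    rcases le_or_gt k k0 with h | h
    · exact hball k h
    · rw [hu_above k h]; omega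
  rcases hGen z hz with rfl | ⟨p, hp, rfl⟩
  · rcases lt_or_ge s k0 with hsk | hsk
    · exact hdiv_v s hsk (fun k hk => (hs_eq k hk) ▸ hza k) (by have := hza s; omega)
    · refine hdiv_u fun k hk => ?_
      rcases lt_or_eq_of_le (hk.trans hsk) with h | h
      · exact (hs_eq k h) ▸ hza k
      · have hks : k = s := by
          apply Fin.ext
          exact congrArg Fin.val h
        subst hks
        have := hza k
        omega
  · have hap : u p + 1 ≤ a p := by
      have := hza p
      rwa [(hfacts p hp).1] at this
    have habk : ∀ k, k < p → u k ≤ a k := by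
      intro k hk
      have := hza k
      rwa [hveq p hp k hk] at this
    rcases le_or_gt s p with hsp | hps
    · refine hdiv_v s (lt_of_le_of_lt hsp hp)
        (fun k hk => (hs_eq k hk) ▸ habk k (lt_of_lt_of_le hk hsp)) ?_
      rcases lt_or_eq_of_le hsp with h | h
      · have := habk s h
        omega
      · subst h
        omega
    · refine hdiv_v p hp (fun k hk => (hs_eq k (hk.trans hps)) ▸ habk k hk) ?_
      rw [← hs_eq p hps]
      exact hap

end Aux

/-- Let `I` be a stable monomial ideal of `S = K[x_1,…,x_n]` with
`max{ m(u) : u ∈ G(I) } = |G(I)|`.  Then `I` is a Gotzmann ideal and `|G(I)| ≤ n`. -/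
theorem stable_max_mdeg_eq_card_gotzmann {K : Type} [Field K] {n : ℕ}
    (I : Ideal (MvPolynomial (Fin n) K)) (hI : IsStable I)
    (hle : ∀ u ∈ minGens I, mdeg u ≤ (minGens I).ncard)
    (hmax : ∃ u ∈ minGens I, mdeg u = (minGens I).ncard) :
    IsGotzmann I ∧ (minGens I).ncard ≤ n := by
  obtain ⟨hlex, hcard⟩ := aux_stable_structure I hI hmax
  refine ⟨?_, hcard⟩
  intro L hL hHilb i j
  rw [aux_lex_eq_of_hilbert hlex hL hHilb]

end Formalization
end

section
/- Let I ⊆ m² be a universal lexsegment ideal of S = K[x_1,...,x_n]. Then I = x_1 · J for some monomial ideal J of S. -/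
/-!
Background definitions: monomial ideals, minimal monomial generators, stable / lexsegment /
universal lexsegment ideals, (graded) Betti numbers `β_{i}` and `β_{ij}` of an ideal
(via Koszul homology, using `Tor_i^S(M,K) ≅ H_i(x_1,…,x_n; M)` as graded vector spaces),
Gotzmann and componentwise linear ideals, generic initial ideals, grade and
projective dimension.
-/

open MvPolynomial

namespace Formalization

variable {K : Type} [Field K] {σ : Type} [Fintype σ] [LinearOrder σ] {n : ℕ}

omit [Fintype σ] [LinearOrder σ] in
lemma edeg_add' (a b : σ →₀ ℕ) : edeg (a + b) = edeg a + edeg b := by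
  classical
  exact Finsupp.sum_add_index (fun _ _ => rfl) (fun _ _ _ _ => rfl)

omit [Fintype σ] [LinearOrder σ] in
lemma edeg_single' (i : σ) (k : ℕ) : edeg (Finsupp.single i k) = k := by
  simp [edeg, Finsupp.sum_single_index]

omit [Fintype σ] [LinearOrder σ] in
lemma edeg_mono' {a b : σ →₀ ℕ} (h : a ≤ b) : edeg a ≤ edeg b := by
  obtain ⟨c, rfl⟩ := le_iff_exists_add.mp h
  simp [edeg_add']

omit [Fintype σ] [LinearOrder σ] in
lemma edeg_mapDomain' {τ : Type} (f : σ → τ) (d : σ →₀ ℕ) :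
    edeg (Finsupp.mapDomain f d) = edeg d := by
  classical
  exact Finsupp.sum_mapDomain_index (fun _ => rfl) (fun _ _ _ => rfl)

omit [Fintype σ] [LinearOrder σ] in
lemma edeg_ge_two_of_mem_msq' {p : MvPolynomial σ K}
    (hp : p ∈ (Ideal.span (Set.range (X (R := K) (σ := σ)))) ^ 2) :
    ∀ d ∈ p.support, 2 ≤ edeg d := by
  classical
  rw [sq, Ideal.span_mul_span'] at hp
  induction hp using Submodule.span_induction with
  | mem x hx =>
    obtain ⟨a, ⟨i, rfl⟩, b, ⟨j, rfl⟩, rfl⟩ := hx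
    intro d hd
    simp only [X, monomial_mul, one_mul, support_monomial, if_neg (one_ne_zero' K),
      Finset.mem_singleton] at hd
    subst hd
    simp [edeg_add', edeg_single']
  | zero => simp
  | add x y _ _ ihx ihy =>
    intro d hd
    rcases Finset.mem_union.mp (MvPolynomial.support_add hd) with h | h
    · exact ihx d h
    · exact ihy d h
  | smul c x _ ih =>
    intro d hd
    have := MvPolynomial.support_mul c x hd
    rw [Finset.mem_add] at this
    obtain ⟨d1, hd1, d2, hd2, rfl⟩ := this
    have := ih d2 hd2
    rw [edeg_add']; omega

lemma key_x1_dvd {n : ℕ} (hn : 0 < n) (I : Ideal (MvPolynomial (Fin n) K))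
    (hulex : IsUniversalLex I)
    (hm2 : I ≤ (Ideal.span (Set.range (X (R := K) (σ := Fin n)))) ^ 2) :
    ∀ d : Fin n →₀ ℕ, monomial d (1 : K) ∈ I → 1 ≤ d ⟨0, hn⟩ := by
  classical
  intro d hd
  by_contra hdz
  push_neg at hdz
  interval_cases h : d ⟨0, hn⟩
  · clear hdz
    set z : Fin n := ⟨0, hn⟩
    set f : Fin n → Fin (n + 1) := Fin.castLE (Nat.le_add_right n 1) with hf
    have hfinj : Function.Injective f := Fin.castLE_injective _
    obtain ⟨A, hA⟩ := hulex.1.1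
    have hlex' := hulex.2 1 le_rfl
    have hI' : Ideal.map (rename (R := K) f) I =
        Ideal.span ((fun e => monomial e (1 : K)) '' (Finsupp.mapDomain f '' A)) := by
      rw [hA, Ideal.map_span, Set.image_image, Set.image_image]
      refine congrArg Ideal.span (Set.image_congr fun a _ => ?_)
      exact rename_monomial f a 1
    set e : ℕ := edeg d with he
    have he2 : 2 ≤ e := by
      refine edeg_ge_two_of_mem_msq' (hm2 hd) d ?_
      rw [support_monomial, if_neg (one_ne_zero' K)]
      exact Finset.mem_singleton_self d
    set u' : Fin (n + 1) →₀ ℕ := Finsupp.mapDomain f d with hu'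
    have hu'mem : monomial u' (1 : K) ∈ Ideal.map (rename (R := K) f) I := by
      rw [hu', ← rename_monomial]
      exact Ideal.mem_map_of_mem _ hd
    set v : Fin (n + 1) →₀ ℕ :=
      Finsupp.single 0 1 + Finsupp.single (Fin.last n) (e - 1) with hv
    have hlast0 : Fin.last n ≠ (0 : Fin (n + 1)) := by
      intro hc
      have := congrArg Fin.val hc
      simp [Fin.last] at this
      omega
    have hvdeg : edeg v = edeg u' := by
      rw [hv, edeg_add', edeg_single', edeg_single', hu', edeg_mapDomain', ← he]
      omega
    have hvmem : monomial v (1 : K) ∈ Ideal.map (rename (R := K) f) I := by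
      refine hlex'.2 u' v hu'mem hvdeg (Or.inl ⟨0, fun j hj => absurd hj (Fin.not_lt_zero j), ?_⟩)
      have hu0 : u' 0 = 0 := by
        have : (0 : Fin (n + 1)) = f z := by
          apply Fin.ext; simp [hf, z]
        rw [this, hu', Finsupp.mapDomain_apply hfinj, h]
      have hv0 : v 0 = 1 := by
        simp [hv, Finsupp.single_apply, hlast0]
      omega
    rw [hI', mem_ideal_span_monomial_image] at hvmem
    obtain ⟨si, ⟨a, haA, rfl⟩, hle⟩ := hvmem v (by
      rw [support_monomial, if_neg (one_ne_zero' K)]; exact Finset.mem_singleton_self v)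
    have haI : monomial a (1 : K) ∈ I := by
      rw [hA]; exact Ideal.subset_span ⟨a, haA, rfl⟩
    have ha2 : 2 ≤ edeg a := by
      refine edeg_ge_two_of_mem_msq' (hm2 haI) a ?_
      rw [support_monomial, if_neg (one_ne_zero' K)]
      exact Finset.mem_singleton_self a
    have hasmall : a ≤ Finsupp.single z 1 := by
      intro i
      have h1 : a i ≤ v (f i) := by
        rw [← Finsupp.mapDomain_apply hfinj a i]
        exact hle (f i)
      have hlastne : Fin.last n ≠ f i := by
        intro hc
        have := congrArg Fin.val hc
        simp [Fin.last, hf] at this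
        omega
      have hvfi : v (f i) = if z = i then 1 else 0 := by
        rw [hv, Finsupp.add_apply, Finsupp.single_apply, Finsupp.single_apply,
          if_neg hlastne, add_zero]
        by_cases hzi : z = i
        · subst hzi
          rw [if_pos rfl, if_pos (by apply Fin.ext; simp [hf, z])]
        · rw [if_neg hzi, if_neg ?_]
          intro hc
          exact hzi (Fin.ext (by simpa [hf, z] using congrArg Fin.val hc))
      rw [hvfi] at h1
      rw [Finsupp.single_apply]
      split <;> split at h1 <;> omega
    have := edeg_mono' hasmall
    rw [edeg_single'] at this
    omega

/-- Let `I ⊆ m²` be a universal lexsegment ideal of `S = K[x_1,…,x_n]`.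
Then `I = x_1 · J` for some monomial ideal `J` of `S`. -/
theorem universalLex_in_m_sq_eq_x1_mul {K : Type} [Field K] {n : ℕ} (hn : 0 < n)
    (I : Ideal (MvPolynomial (Fin n) K)) (hulex : IsUniversalLex I)
    (hm2 : I ≤ (Ideal.span (Set.range (X (R := K) (σ := Fin n)))) ^ 2) :
    ∃ J : Ideal (MvPolynomial (Fin n) K), IsMonomialIdeal J ∧
      I = Ideal.span {(X (⟨0, hn⟩ : Fin n) : MvPolynomial (Fin n) K)} * J := by
  classical
  have hkey := key_x1_dvd hn I hulex hm2
  obtain ⟨A, hA⟩ := hulex.1.1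
  set z : Fin n := ⟨0, hn⟩ with hz
  set M : Set (Fin n →₀ ℕ) := {d | monomial d (1 : K) ∈ I} with hM
  have hIM : I = Ideal.span ((fun d => monomial d (1 : K)) '' M) := by
    apply le_antisymm
    · nth_rewrite 1 [hA]
      refine Ideal.span_mono (Set.image_mono (f := _) fun a ha => ?_)
      show monomial a (1 : K) ∈ I
      rw [hA]
      exact Ideal.subset_span ⟨a, ha, rfl⟩
    · refine Ideal.span_le.mpr ?_
      rintro q ⟨d, hd, rfl⟩
      exact hd
  refine ⟨Ideal.span ((fun d => monomial d (1 : K)) ''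
      ((fun d => d - Finsupp.single z 1) '' M)), ⟨_, rfl⟩, ?_⟩
  rw [Ideal.span_mul_span', Set.singleton_mul, Set.image_image, Set.image_image]
  nth_rewrite 1 [hIM]
  refine congrArg Ideal.span (Set.image_congr fun d hd => ?_)
  have hd1 : 1 ≤ d z := hkey d hd
  have hXz : (X z : MvPolynomial (Fin n) K) = monomial (Finsupp.single z 1) 1 := rfl
  rw [hXz, monomial_mul, one_mul]
  have hexp : ((Finsupp.single z 1) + (d - Finsupp.single z 1) : Fin n →₀ ℕ) = d := by
    ext j
    rw [Finsupp.add_apply, Finsupp.tsub_apply, Finsupp.single_apply]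
    by_cases hjz : z = j
    · subst hjz; simp; omega
    · simp [hjz]
  rw [hexp]


end Formalization
end
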